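/- For the Bernoulli(p) random walk, with τ_0 the first return to 0, for every even j ≥ 2: P(τ_0 = j, S_1 > 0) = P(τ_0 = j, S_1 < 0) = (1/2)·P(τ_0 = j) = 2·a_{j−2}·(pq)^{j/2}, where a_i = (1/(i+2))·C(i, i/2). -/

import Mathlib

open List DyckStep

/-- Step corresponding to an integer value. -/
def stepOfZ (z : ℤ) : DyckStep := if z = 1 then U else D
/-- Value of a step. -/
def valOfS (s : DyckStep) : ℤ := if s = U then 1 else -1

lemma valOfS_mem (s : DyckStep) : valOfS s = 1 ∨ valOfS s = -1 := by
  cases s <;> simp [valOfS]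

lemma map_valOfS_stepOfZ (l : List ℤ) (h : ∀ x ∈ l, x = 1 ∨ x = -1) :
    (l.map stepOfZ).map valOfS = l := by
  induction l with
  | nil => rfl
  | cons a t ih =>
    have ha := h a (by simp)
    simp only [map_cons]
    rw [ih fun x hx => h x (by simp [hx])]
    rcases ha with h1 | h1 <;> simp [h1, stepOfZ, valOfS]

lemma map_stepOfZ_valOfS (w : List DyckStep) : (w.map valOfS).map stepOfZ = w := by
  induction w with
  | nil => rfl
  | cons a t ih => cases a <;> simp [valOfS, stepOfZ, ih]

lemma sum_map_valOfS (w : List DyckStep) :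
    (w.map valOfS).sum = (w.count U : ℤ) - (w.count D : ℤ) := by
  induction w with
  | nil => simp
  | cons a t ih =>
    cases a <;> simp [valOfS, ih, count_cons] <;> ring

lemma count_add_count (w : List DyckStep) : w.count U + w.count D = w.length := by
  induction w with
  | nil => simp
  | cons a t ih => cases a <;> simp [count_cons, ← ih] <;> ring

/-- sums of prefixes of a ±1 list that never vanish and start positive stay positive -/
lemma take_sum_pos (l : List ℤ) (h1 : ∀ x ∈ l, x = 1 ∨ x = -1)
    (h2 : 0 < (l.take 1).sum) (m : ℕ) (h1m : 1 ≤ m)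
    (hm : ∀ k, 1 ≤ k → k ≤ m → (l.take k).sum ≠ 0) :
    0 < (l.take m).sum := by
  induction m, h1m using Nat.le_induction with
  | base => exact h2
  | succ m h1m ih =>
    have hprev : 0 < (l.take m).sum :=
      ih fun k hk1 hk2 => hm k hk1 (by omega)
    by_cases hlen : m < l.length
    · have hstep := l.sum_take_succ m hlen
      have hval := h1 (l[m]'hlen) (l.getElem_mem hlen)
      have hne := hm (m + 1) (by omega) le_rfl
      rcases hval with hv | hv <;> omega
    · rw [take_of_length_le (by omega)] at hprev ⊢
      exact hprev

/-- Build a Dyck word from a ±1-valued list with zero sum and nonnegative prefix sums. -/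
def dyckOfList (l : List ℤ) (h : ∀ x ∈ l, x = 1 ∨ x = -1) (hsum : l.sum = 0)
    (hpos : ∀ m, 1 ≤ m → m < l.length → 0 < (l.take m).sum) : DyckWord where
  toList := l.map stepOfZ
  count_U_eq_count_D := by
    have h2 := sum_map_valOfS (l.map stepOfZ)
    rw [map_valOfS_stepOfZ l h, hsum] at h2
    omega
  count_D_le_count_U i := by
    have h2 := sum_map_valOfS ((l.take i).map stepOfZ)
    rw [map_valOfS_stepOfZ _ (fun x hx => h x (l.take_subset i hx))] at h2
    rw [map_take] at h2
    have h3 : 0 ≤ (l.take i).sum := by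
      rcases Nat.eq_zero_or_pos i with hi | hi
      · simp [hi]
      rcases lt_or_ge i l.length with hil | hil
      · exact (hpos i hi hil).le
      · rw [take_of_length_le hil, hsum]
    omega

lemma dyckOfList_toList (l : List ℤ) (h hsum hpos) :
    (dyckOfList l h hsum hpos).toList = l.map stepOfZ := rfl

lemma dyckOfList_isNested (l : List ℤ) (h hsum hpos) (hne : l ≠ [])
    (hstrict : ∀ m, 1 ≤ m → m < l.length → 0 < (l.take m).sum) :
    (dyckOfList l h hsum hpos).IsNested := by
  constructor
  · rw [← DyckWord.toList_ne_nil, dyckOfList_toList]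
    simpa using hne
  · intro i hi hilen
    rw [dyckOfList_toList] at hilen ⊢
    rw [length_map] at hilen
    have h2 := sum_map_valOfS ((l.take i).map stepOfZ)
    rw [map_valOfS_stepOfZ _ (fun x hx => h x (l.take_subset i hx))] at h2
    rw [map_take] at h2
    have h3 := hstrict i hi hilen
    omega

lemma length_dyckOfList (l : List ℤ) (h hsum hpos) :
    (dyckOfList l h hsum hpos).toList.length = l.length := by
  rw [dyckOfList_toList, length_map]

/-- Strict positivity of interior prefix sums for the value list of a nested Dyck word. -/
lemma nest_interior_pos (q : DyckWord) (m : ℕ) (hm1 : 1 ≤ m)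
    (hm2 : m < q.nest.toList.length) :
    0 < ((q.nest.toList.map valOfS).take m).sum := by
  have hn := DyckWord.IsNested.nest (p := q)
  have h2 := hn.2 (by omega : 0 < m) hm2
  have h3 := sum_map_valOfS (q.nest.toList.take m)
  rw [map_take] at h3
  omega

lemma nest_sum_zero (q : DyckWord) : (q.nest.toList.map valOfS).sum = 0 := by
  have h3 := sum_map_valOfS q.nest.toList
  have := q.nest.count_U_eq_count_D
  omega

lemma nest_length (q : DyckWord) : q.nest.toList.length = 2 * q.semilength + 2 := by
  have := q.nest.two_mul_semilength_eq_length
  rw [DyckWord.semilength_nest] at this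
  omega

open Finset in
/-- partial sum of the first `m` values -/
def Tsum {j : ℕ} (ε : Fin j → ℤ) (m : ℕ) : ℤ :=
  ∑ i ∈ Finset.univ.filter (fun i : Fin j => i.val < m), ε i

lemma Tsum_eq_take_sum {j : ℕ} (ε : Fin j → ℤ) (m : ℕ) :
    Tsum ε m = ((List.ofFn ε).take m).sum := (sum_take_ofFn ε m).symm

lemma Tsum_last {j : ℕ} (ε : Fin j → ℤ) : Tsum ε j = (List.ofFn ε).sum := by
  rw [Tsum_eq_take_sum, take_of_length_le (by simp)]

lemma Tsum_neg {j : ℕ} (ε : Fin j → ℤ) (m : ℕ) : Tsum (-ε) m = -Tsum ε m := by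
  simp [Tsum]

abbrev PPpos (j : ℕ) (ε : Fin j → ℤ) : Prop :=
  Tsum ε j = 0 ∧ (∀ m ∈ Finset.Ico 1 j, Tsum ε m ≠ 0) ∧ 0 < Tsum ε 1
abbrev PPneg (j : ℕ) (ε : Fin j → ℤ) : Prop :=
  Tsum ε j = 0 ∧ (∀ m ∈ Finset.Ico 1 j, Tsum ε m ≠ 0) ∧ Tsum ε 1 < 0
abbrev PPtot (j : ℕ) (ε : Fin j → ℤ) : Prop :=
  Tsum ε j = 0 ∧ (∀ m ∈ Finset.Ico 1 j, Tsum ε m ≠ 0)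

instance (j : ℕ) : DecidablePred (PPpos j) := fun ε => by unfold PPpos; infer_instance
instance (j : ℕ) : DecidablePred (PPneg j) := fun ε => by unfold PPneg; infer_instance
instance (j : ℕ) : DecidablePred (PPtot j) := fun ε => by unfold PPtot; infer_instance

def Apos (j : ℕ) : Finset (Fin j → ℤ) :=
  (Fintype.piFinset fun _ => ({1, -1} : Finset ℤ)).filter (PPpos j)

def Aneg (j : ℕ) : Finset (Fin j → ℤ) :=
  (Fintype.piFinset fun _ => ({1, -1} : Finset ℤ)).filter (PPneg j)

def Atot (j : ℕ) : Finset (Fin j → ℤ) :=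
  (Fintype.piFinset fun _ => ({1, -1} : Finset ℤ)).filter (PPtot j)

lemma mem_Apos_iff {j : ℕ} {ε : Fin j → ℤ} :
    ε ∈ Apos j ↔ ε ∈ (Fintype.piFinset fun _ : Fin j => ({1, -1} : Finset ℤ)) ∧
      Tsum ε j = 0 ∧ (∀ m, 1 ≤ m → m < j → Tsum ε m ≠ 0) ∧ 0 < Tsum ε 1 := by
  rw [Apos, Finset.mem_filter]
  unfold PPpos
  simp only [Finset.mem_Ico]
  tauto

lemma mem_Aneg_iff {j : ℕ} {ε : Fin j → ℤ} :
    ε ∈ Aneg j ↔ ε ∈ (Fintype.piFinset fun _ : Fin j => ({1, -1} : Finset ℤ)) ∧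
      Tsum ε j = 0 ∧ (∀ m, 1 ≤ m → m < j → Tsum ε m ≠ 0) ∧ Tsum ε 1 < 0 := by
  rw [Aneg, Finset.mem_filter]
  unfold PPneg
  simp only [Finset.mem_Ico]
  tauto

lemma mem_Atot_iff {j : ℕ} {ε : Fin j → ℤ} :
    ε ∈ Atot j ↔ ε ∈ (Fintype.piFinset fun _ : Fin j => ({1, -1} : Finset ℤ)) ∧
      Tsum ε j = 0 ∧ (∀ m, 1 ≤ m → m < j → Tsum ε m ≠ 0) := by
  rw [Atot, Finset.mem_filter]
  unfold PPtot
  simp only [Finset.mem_Ico]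
  tauto

lemma mem_pm {j : ℕ} {ε : Fin j → ℤ}
    (h : ε ∈ Fintype.piFinset fun _ : Fin j => ({1, -1} : Finset ℤ)) (i : Fin j) :
    ε i = 1 ∨ ε i = -1 := by
  have := Fintype.mem_piFinset.mp h i
  simpa using this

lemma mem_pm_list {j : ℕ} {ε : Fin j → ℤ}
    (h : ε ∈ Fintype.piFinset fun _ : Fin j => ({1, -1} : Finset ℤ)) :
    ∀ x ∈ List.ofFn ε, x = 1 ∨ x = -1 := by
  intro x hx
  obtain ⟨i, rfl⟩ := List.mem_ofFn.mp hx
  exact mem_pm h i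

lemma card_Aneg (j : ℕ) : (Aneg j).card = (Apos j).card := by
  classical
  apply Finset.card_nbij' (i := fun ε => -ε) (j := fun ε => -ε)
  · intro ε hε
    rw [Finset.mem_coe] at hε ⊢
    rw [mem_Aneg_iff] at hε
    obtain ⟨hpi, h1, h2, h3⟩ := hε
    rw [mem_Apos_iff]
    refine ⟨?_, by rw [Tsum_neg]; omega, fun m hm1 hm2 => by rw [Tsum_neg]; exact neg_ne_zero.mpr (h2 m hm1 hm2), by rw [Tsum_neg]; omega⟩
    rw [Fintype.mem_piFinset]
    intro i
    rcases mem_pm hpi i with h | h <;> simp [Pi.neg_apply, h]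
  · intro ε hε
    rw [Finset.mem_coe] at hε ⊢
    rw [mem_Apos_iff] at hε
    obtain ⟨hpi, h1, h2, h3⟩ := hε
    rw [mem_Aneg_iff]
    refine ⟨?_, by rw [Tsum_neg]; omega, fun m hm1 hm2 => by rw [Tsum_neg]; exact neg_ne_zero.mpr (h2 m hm1 hm2), by rw [Tsum_neg]; omega⟩
    rw [Fintype.mem_piFinset]
    intro i
    rcases mem_pm hpi i with h | h <;> simp [Pi.neg_apply, h]
  · intro ε _; simp
  · intro ε _; simp

lemma Tsum_one {j : ℕ} (hj : 0 < j) (ε : Fin j → ℤ) : Tsum ε 1 = ε ⟨0, hj⟩ := by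
  have h : Finset.univ.filter (fun i : Fin j => i.val < 1) = {⟨0, hj⟩} := by
    ext i
    simp [Fin.ext_iff, Nat.lt_one_iff]
  rw [Tsum, h, Finset.sum_singleton]

lemma Atot_eq (j : ℕ) (hj : 0 < j) : Atot j = Apos j ∪ Aneg j := by
  classical
  ext ε
  rw [Finset.mem_union, mem_Atot_iff, mem_Apos_iff, mem_Aneg_iff]
  constructor
  · rintro ⟨hpi, h1, h2⟩
    rcases mem_pm hpi ⟨0, hj⟩ with h | h
    · exact Or.inl ⟨hpi, h1, h2, by rw [Tsum_one hj, h]; norm_num⟩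
    · exact Or.inr ⟨hpi, h1, h2, by rw [Tsum_one hj, h]; norm_num⟩
  · rintro (⟨hpi, h1, h2, h3⟩ | ⟨hpi, h1, h2, h3⟩) <;> exact ⟨hpi, h1, h2⟩

lemma card_Atot (j : ℕ) (hj : 0 < j) : (Atot j).card = (Apos j).card + (Aneg j).card := by
  classical
  rw [Atot_eq j hj, Finset.card_union_of_disjoint]
  rw [Finset.disjoint_left]
  intro ε h1 h2
  rw [mem_Apos_iff] at h1
  rw [mem_Aneg_iff] at h2
  have := h1.2.2.2
  have := h2.2.2.2
  omega

section Bij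
variable {n : ℕ}

lemma Apos_facts1 {ε : Fin (2 * n) → ℤ} (hε : ε ∈ Apos (2 * n)) :
    ∀ x ∈ List.ofFn ε, x = 1 ∨ x = -1 := by
  classical
  exact mem_pm_list (mem_Apos_iff.mp hε).1

lemma Apos_facts2 {ε : Fin (2 * n) → ℤ} (hε : ε ∈ Apos (2 * n)) :
    (List.ofFn ε).sum = 0 := by
  classical
  have := (mem_Apos_iff.mp hε).2.1
  rwa [Tsum_last] at this

lemma Apos_facts3 {ε : Fin (2 * n) → ℤ} (hε : ε ∈ Apos (2 * n)) :
    ∀ m, 1 ≤ m → m < (List.ofFn ε).length → 0 < ((List.ofFn ε).take m).sum := by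
  classical
  obtain ⟨hpi, h1, h2, h3⟩ := mem_Apos_iff.mp hε
  intro m hm1 hm2
  rw [length_ofFn] at hm2
  refine take_sum_pos _ (mem_pm_list hpi) ?_ m hm1 ?_
  · rw [← Tsum_eq_take_sum]; exact h3
  · intro k hk1 hk2
    rw [← Tsum_eq_take_sum]
    exact h2 k hk1 (by omega)

/-- The full Dyck word associated to an element of `Apos`. -/
noncomputable def fullDyck {ε : Fin (2 * n) → ℤ} (hε : ε ∈ Apos (2 * n)) : DyckWord :=
  dyckOfList (List.ofFn ε) (Apos_facts1 hε) (Apos_facts2 hε) (Apos_facts3 hε)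

lemma fullDyck_nested (hn : 1 ≤ n) {ε : Fin (2 * n) → ℤ} (hε : ε ∈ Apos (2 * n)) :
    (fullDyck hε).IsNested := by
  refine dyckOfList_isNested _ _ _ _ ?_ (Apos_facts3 hε)
  intro hcon
  have h2 : (List.ofFn ε).length = 2 * n := by simp
  rw [hcon] at h2
  simp at h2
  omega

lemma fullDyck_toList {ε : Fin (2 * n) → ℤ} (hε : ε ∈ Apos (2 * n)) :
    (fullDyck hε).toList = (List.ofFn ε).map stepOfZ := rfl

lemma fullDyck_semilength {ε : Fin (2 * n) → ℤ} (hε : ε ∈ Apos (2 * n)) :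
    (fullDyck hε).semilength = n := by
  have h := (fullDyck hε).two_mul_semilength_eq_length
  rw [fullDyck_toList, length_map, length_ofFn] at h
  omega

/-- forward map -/
noncomputable def fwdQ (hn : 1 ≤ n) {ε : Fin (2 * n) → ℤ} (hε : ε ∈ Apos (2 * n)) : DyckWord :=
  (fullDyck hε).denest (fullDyck_nested hn hε)

lemma fwdQ_nest (hn : 1 ≤ n) {ε : Fin (2 * n) → ℤ} (hε : ε ∈ Apos (2 * n)) :
    (fwdQ hn hε).nest = fullDyck hε := DyckWord.nest_denest _ _

lemma fwdQ_semilength (hn : 1 ≤ n) {ε : Fin (2 * n) → ℤ} (hε : ε ∈ Apos (2 * n)) :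
    (fwdQ hn hε).semilength = n - 1 := by
  have h := DyckWord.semilength_nest (p := fwdQ hn hε)
  rw [fwdQ_nest hn hε, fullDyck_semilength] at h
  omega

lemma fwdQ_nest_toList (hn : 1 ≤ n) {ε : Fin (2 * n) → ℤ} (hε : ε ∈ Apos (2 * n)) :
    (fwdQ hn hε).nest.toList = (List.ofFn ε).map stepOfZ := by
  rw [fwdQ_nest hn hε]; rfl

lemma nest_toList_length (hn : 1 ≤ n) {q : DyckWord} (hq : q.semilength = n - 1) :
    q.nest.toList.length = 2 * n := by
  rw [nest_length, hq]; omega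

/-- backward map -/
noncomputable def bwd (hn : 1 ≤ n) (q : DyckWord) (hq : q.semilength = n - 1) :
    Fin (2 * n) → ℤ :=
  fun i => (q.nest.toList.map valOfS)[i.val]'(by
    rw [length_map, nest_toList_length hn hq]; exact i.2)

lemma bwd_ofFn (hn : 1 ≤ n) (q : DyckWord) (hq : q.semilength = n - 1) :
    List.ofFn (bwd hn q hq) = q.nest.toList.map valOfS := by
  apply List.ext_getElem
  · rw [length_ofFn, length_map, nest_toList_length hn hq]
  · intro i h1 h2
    rw [List.getElem_ofFn]
    rfl

lemma bwd_mem (hn : 1 ≤ n) (q : DyckWord) (hq : q.semilength = n - 1) :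
    bwd hn q hq ∈ Apos (2 * n) := by
  classical
  rw [mem_Apos_iff]
  have hlen : q.nest.toList.length = 2 * n := nest_toList_length hn hq
  have hTs : ∀ m, Tsum (bwd hn q hq) m = ((q.nest.toList.map valOfS).take m).sum := by
    intro m
    rw [Tsum_eq_take_sum, bwd_ofFn]
  refine ⟨?_, ?_, ?_, ?_⟩
  · rw [Fintype.mem_piFinset]
    intro i
    have : bwd hn q hq i = valOfS (q.nest.toList[i.val]'(by rw [hlen]; exact i.2)) := by
      rw [bwd, List.getElem_map]
    rw [this]
    rcases valOfS_mem (q.nest.toList[i.val]'(by rw [hlen]; exact i.2)) with h | h <;> simp [h]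
  · rw [hTs, take_of_length_le (by rw [length_map, hlen])]
    exact nest_sum_zero q
  · intro m hm1 hm2
    rw [hTs]
    exact (nest_interior_pos q m hm1 (by omega)).ne'
  · rw [hTs]
    exact nest_interior_pos q 1 le_rfl (by omega)

lemma left_inv (hn : 1 ≤ n) {ε : Fin (2 * n) → ℤ} (hε : ε ∈ Apos (2 * n)) :
    bwd hn (fwdQ hn hε) (fwdQ_semilength hn hε) = ε := by
  funext i
  have key : (fwdQ hn hε).nest.toList.map valOfS = List.ofFn ε := by
    rw [fwdQ_nest_toList hn hε, map_valOfS_stepOfZ _ (Apos_facts1 hε)]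
  rw [bwd]
  simp only [key]
  rw [List.getElem_ofFn]

lemma right_inv (hn : 1 ≤ n) (q : DyckWord) (hq : q.semilength = n - 1) :
    fwdQ hn (bwd_mem hn q hq) = q := by
  have hfull : fullDyck (bwd_mem hn q hq) = q.nest := by
    apply DyckWord.ext
    rw [fullDyck, dyckOfList_toList, bwd_ofFn, map_stepOfZ_valOfS]
  apply DyckWord.ext
  have h1 : (fwdQ hn (bwd_mem hn q hq)).toList
      = (fullDyck (bwd_mem hn q hq)).toList.dropLast.tail := rfl
  rw [h1, hfull]
  show (([U] ++ q.toList ++ [D]).dropLast).tail = q.toList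
  rw [append_assoc, singleton_append]
  rw [show (U :: (q.toList ++ [D])).dropLast = U :: (q.toList ++ [D]).dropLast by
    rw [dropLast_cons_of_ne_nil (by simp)]]
  simp

lemma card_Apos (hn : 1 ≤ n) : (Apos (2 * n)).card = catalan (n - 1) := by
  classical
  rw [← DyckWord.card_dyckWord_semilength_eq_catalan (n - 1), ← Finset.card_univ]
  refine Finset.card_bij' (fun ε hε => (⟨fwdQ hn hε, fwdQ_semilength hn hε⟩ :
      {q : DyckWord // q.semilength = n - 1}))
    (fun q _ => bwd hn q.1 q.2) (fun ε hε => Finset.mem_univ _)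
    (fun q _ => bwd_mem hn q.1 q.2) (fun ε hε => left_inv hn hε) ?_
  intro q _
  exact Subtype.ext (right_inv hn q.1 q.2)

end Bij

open MeasureTheory ProbabilityTheory Finset

noncomputable def aCoef (i : ℕ) : ℝ := (1 / ((i : ℝ) + 2)) * (i.choose (i / 2) : ℝ)

lemma catalan_real {n : ℕ} (hn : 1 ≤ n) : (catalan (n - 1) : ℝ) = 2 * aCoef (2 * n - 2) := by
  have h := succ_mul_catalan_eq_centralBinom (n - 1)
  rw [show n - 1 + 1 = n by omega] at h
  have hcb : Nat.centralBinom (n - 1) = (2 * n - 2).choose ((2 * n - 2) / 2) := by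
    rw [Nat.centralBinom]
    congr 1 <;> omega
  rw [hcb] at h
  have hc : ((2 * n - 2).choose ((2 * n - 2) / 2) : ℝ) = (n : ℝ) * (catalan (n - 1) : ℝ) := by
    exact_mod_cast congrArg (Nat.cast (R := ℝ)) h.symm
  have hcast : ((2 * n - 2 : ℕ) : ℝ) + 2 = 2 * (n : ℝ) := by
    have : (2 * n - 2 : ℕ) = 2 * n - 2 := rfl
    rw [Nat.cast_sub (by omega)]
    push_cast
    ring
  have hnne : (n : ℝ) ≠ 0 := by
    simp only [ne_eq, Nat.cast_eq_zero]
    omega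
  rw [aCoef, hc, hcast]
  field_simp

theorem law_tau0_S1 {Ω : Type*} [MeasurableSpace Ω] (μ : Measure Ω)
    [IsProbabilityMeasure μ]
    (p : ℝ) (hp0 : 0 < p) (hp1 : p < 1)
    (X : ℕ → Ω → ℤ) (hmeas : ∀ i, Measurable (X i))
    (hindep : iIndepFun X μ)
    (hX1 : ∀ i, μ {ω | X i ω = 1} = ENNReal.ofReal p)
    (hX2 : ∀ i, μ {ω | X i ω = -1} = ENNReal.ofReal (1 - p))
    (S : ℕ → Ω → ℤ) (hS : ∀ n ω, S n ω = ∑ i ∈ Finset.range n, X i ω)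
    (j : ℕ) (hj : Even j) (hj2 : 2 ≤ j)
    :
    (μ {ω | (S j ω = 0 ∧ ∀ m, 1 ≤ m → m < j → S m ω ≠ 0) ∧ 0 < S 1 ω}).toReal
      = (μ {ω | (S j ω = 0 ∧ ∀ m, 1 ≤ m → m < j → S m ω ≠ 0) ∧ S 1 ω < 0}).toReal ∧
    (μ {ω | (S j ω = 0 ∧ ∀ m, 1 ≤ m → m < j → S m ω ≠ 0) ∧ S 1 ω < 0}).toReal
      = (1 / 2) * (μ {ω | S j ω = 0 ∧ ∀ m, 1 ≤ m → m < j → S m ω ≠ 0}).toReal ∧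
    (1 / 2) * (μ {ω | S j ω = 0 ∧ ∀ m, 1 ≤ m → m < j → S m ω ≠ 0}).toReal
      = 2 * aCoef (j - 2) * (p * (1 - p)) ^ (j / 2) := by
  classical
  have hq0 : (0:ℝ) ≤ 1 - p := by linarith
  obtain ⟨n, hjn⟩ : ∃ n, j = 2 * n := by
    obtain ⟨r, hr⟩ := hj
    exact ⟨r, by omega⟩
  have hn1 : 1 ≤ n := by omega
  set W : ENNReal := (ENNReal.ofReal p) ^ n * (ENNReal.ofReal (1 - p)) ^ n with hW
  set G : Set Ω := {ω | ∀ i : Fin j, X i ω = 1 ∨ X i ω = -1} with hG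
  set C : (Fin j → ℤ) → Set Ω := fun ε => {ω | ∀ i : Fin j, X i ω = ε i} with hC
  have hXmeas : ∀ (i : ℕ) (z : ℤ), MeasurableSet {ω | X i ω = z} := by
    intro i z
    have : {ω | X i ω = z} = X i ⁻¹' {z} := by ext ω; simp
    rw [this]
    exact hmeas i (measurableSet_singleton _)
  -- bridge between S and Tsum
  have hbridge : ∀ (ω : Ω) (m : ℕ), m ≤ j → S m ω = Tsum (fun i : Fin j => X i ω) m := by
    intro ω m hm
    rw [hS, Tsum, Finset.sum_filter,
      Fin.sum_univ_eq_sum_range (fun k => if k < m then X k ω else 0) j, ← Finset.sum_filter]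
    congr 1
    ext k
    simp only [Finset.mem_filter, Finset.mem_range]
    omega
  -- complement of G is null
  have hGc : μ Gᶜ = 0 := by
    have hB : ∀ i : Fin j, μ ({ω | X (i:ℕ) ω = 1} ∪ {ω | X (i:ℕ) ω = -1})ᶜ = 0 := by
      intro i
      have hdisj : Disjoint {ω | X (i:ℕ) ω = 1} {ω | X (i:ℕ) ω = -1} := by
        rw [Set.disjoint_left]
        intro ω h1 h2
        simp only [Set.mem_setOf_eq] at h1 h2
        omega
      have hu : μ ({ω | X (i:ℕ) ω = 1} ∪ {ω | X (i:ℕ) ω = -1}) = 1 := by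
        rw [measure_union hdisj (hXmeas i (-1)), hX1, hX2,
          ← ENNReal.ofReal_add hp0.le hq0]
        norm_num
      rw [measure_compl ((hXmeas i 1).union (hXmeas i (-1))) (measure_ne_top μ _), hu,
        measure_univ, tsub_self]
    refine measure_mono_null ?_ (measure_iUnion_null fun i : Fin j => hB i)
    intro ω hω
    simp only [hG, Set.mem_compl_iff, Set.mem_setOf_eq, not_forall] at hω
    obtain ⟨i, hi⟩ := hω
    push_neg at hi
    refine Set.mem_iUnion.mpr ⟨i, ?_⟩
    simp only [Set.mem_compl_iff, Set.mem_union, Set.mem_setOf_eq]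
    push_neg
    exact hi
  -- measure of a cylinder in Atot
  have hWcyl : ∀ ε ∈ Atot j, μ (C ε) = W := by
    intro ε hε
    obtain ⟨hpi, hT0, -⟩ := mem_Atot_iff.mp hε
    set sets : ℕ → Set ℤ := fun k => if h : k < j then {ε ⟨k, h⟩} else Set.univ with hsets
    have hseti : ∀ i : Fin j, sets (i : ℕ) = {ε i} := by
      intro i
      simp only [hsets, i.isLt, dif_pos, Fin.eta]
    have hCeq : C ε = ⋂ k ∈ Finset.range j, X k ⁻¹' sets k := by
      ext ω
      simp only [hC, Set.mem_setOf_eq, Set.mem_iInter, Finset.mem_range, Set.mem_preimage]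
      constructor
      · intro h k hk
        have := h ⟨k, hk⟩
        rw [hsets]
        simp only [dif_pos hk, Set.mem_singleton_iff]
        exact this
      · intro h i
        have := h i.1 i.2
        rw [hseti i] at this
        exact this
    rw [hCeq, hindep.measure_inter_preimage_eq_mul (Finset.range j)
      (fun k hk => by
        by_cases h : k < j
        · simp only [hsets, dif_pos h]
          exact measurableSet_singleton _
        · simp only [hsets, dif_neg h]
          exact MeasurableSet.univ)]
    rw [← Fin.prod_univ_eq_prod_range (fun k => μ (X k ⁻¹' sets k)) j]
    have hfacts : ∀ i : Fin j,
        μ (X (i:ℕ) ⁻¹' sets (i:ℕ)) = if ε i = 1 then ENNReal.ofReal p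
          else ENNReal.ofReal (1 - p) := by
      intro i
      rw [hseti i]
      have hpre : ∀ z : ℤ, X (i:ℕ) ⁻¹' ({z} : Set ℤ) = {ω | X (i:ℕ) ω = z} := by
        intro z; ext ω; simp
      rcases mem_pm hpi i with h | h
      · rw [h, if_pos rfl, hpre, hX1]
      · rw [h, if_neg (by norm_num), hpre, hX2]
    rw [Finset.prod_congr rfl (fun i _ => hfacts i), Finset.prod_ite, Finset.prod_const,
      Finset.prod_const]
    -- count the number of +1's
    have hTuniv : Tsum ε j = ∑ i : Fin j, ε i := by
      rw [Tsum]
      congr 1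
      exact Finset.filter_true_of_mem (fun i _ => i.isLt)
    have hsplit := Finset.sum_filter_add_sum_filter_not Finset.univ
      (fun i : Fin j => ε i = 1) ε
    have hple : ∑ i ∈ Finset.univ.filter (fun i : Fin j => ε i = 1), ε i
        = ((Finset.univ.filter (fun i : Fin j => ε i = 1)).card : ℤ) := by
      rw [Finset.sum_congr rfl (fun i hi => (Finset.mem_filter.mp hi).2),
        Finset.sum_const, nsmul_eq_mul, mul_one]
    have hmle : ∑ i ∈ Finset.univ.filter (fun i : Fin j => ¬ ε i = 1), ε i
        = -((Finset.univ.filter (fun i : Fin j => ¬ ε i = 1)).card : ℤ) := by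
      rw [Finset.sum_congr rfl (fun i hi => ?_), Finset.sum_const, nsmul_eq_mul, mul_neg_one]
      rcases mem_pm hpi i with h | h
      · exact absurd h (Finset.mem_filter.mp hi).2
      · exact h
    have hcards := Finset.card_filter_add_card_filter_not
      (s := (Finset.univ : Finset (Fin j))) (p := fun i : Fin j => ε i = 1)
    rw [Finset.card_univ, Fintype.card_fin] at hcards
    have hT0' : Tsum ε j = 0 := hT0
    rw [hTuniv] at hT0'
    rw [hple, hmle] at hsplit
    have hcard1 : (Finset.univ.filter (fun i : Fin j => ε i = 1)).card = n := by omega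
    have hcard2 : (Finset.univ.filter (fun i : Fin j => ¬ ε i = 1)).card = n := by omega
    rw [hcard1, hcard2]
  -- generic event measure
  have hmuE : ∀ (E : Set Ω) (A : Finset (Fin j → ℤ)), (E ∩ G = ⋃ ε ∈ A, C ε) →
      A ⊆ Atot j → μ E = A.card * W := by
    intro E A hEG hAsub
    have h1 : μ E = μ (E ∩ G) := by
      apply _root_.le_antisymm
      · calc μ E ≤ μ ((E ∩ G) ∪ Gᶜ) := measure_mono (fun ω hω => by
              by_cases h : ω ∈ G
              exacts [Or.inl ⟨hω, h⟩, Or.inr h])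
          _ ≤ μ (E ∩ G) + μ Gᶜ := measure_union_le _ _
          _ = μ (E ∩ G) := by rw [hGc, add_zero]
      · exact measure_mono Set.inter_subset_left
    have hdisjC : (A : Set (Fin j → ℤ)).PairwiseDisjoint C := by
      intro ε hε ε' hε' hne
      rw [Function.onFun, Set.disjoint_left]
      intro ω hω hω'
      refine hne (funext fun i => ?_)
      have h1 : X (i:ℕ) ω = ε i := hω i
      have h2 : X (i:ℕ) ω = ε' i := hω' i
      omega
    have hCm : ∀ ε : Fin j → ℤ, MeasurableSet (C ε) := by
      intro ε
      have : C ε = ⋂ i : Fin j, {ω | X (i:ℕ) ω = ε i} := by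
        ext ω
        simp [hC, Set.mem_iInter]
      rw [this]
      exact MeasurableSet.iInter fun i => hXmeas i (ε i)
    rw [h1, hEG, measure_biUnion_finset hdisjC (fun ε _ => hCm ε),
      Finset.sum_congr rfl (fun ε hε => hWcyl ε (hAsub hε)), Finset.sum_const, nsmul_eq_mul]
  -- the three decompositions
  have hdecomp_pos :
      {ω | (S j ω = 0 ∧ ∀ m, 1 ≤ m → m < j → S m ω ≠ 0) ∧ 0 < S 1 ω} ∩ G
        = ⋃ ε ∈ Apos j, C ε := by
    ext ω
    simp only [Set.mem_inter_iff, Set.mem_setOf_eq, Set.mem_iUnion]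
    constructor
    · rintro ⟨⟨⟨hj0, hmne⟩, h1pos⟩, hGω⟩
      refine ⟨fun i : Fin j => X (i:ℕ) ω, ?_, fun i => rfl⟩
      refine mem_Apos_iff.mpr ⟨?_, ?_, ?_, ?_⟩
      · rw [Fintype.mem_piFinset]
        intro i
        rcases hGω i with h | h <;> simp [h]
      · rw [← hbridge ω j le_rfl]; exact hj0
      · intro m hm1 hm2
        rw [← hbridge ω m (by omega)]
        exact hmne m hm1 hm2
      · rw [← hbridge ω 1 (by omega)]
        exact h1pos
    · rintro ⟨ε, hε, hωC⟩
      have hXe : (fun i : Fin j => X (i:ℕ) ω) = ε := funext fun i => hωC i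
      obtain ⟨hpi, hT0, hTne, hT1⟩ := mem_Apos_iff.mp hε
      have hGω : ω ∈ G := by
        intro i
        rw [hωC i]
        rcases mem_pm hpi i with h | h <;> simp [h]
      refine ⟨⟨⟨?_, ?_⟩, ?_⟩, hGω⟩
      · rw [hbridge ω j le_rfl, hXe]; exact hT0
      · intro m hm1 hm2
        rw [hbridge ω m (by omega), hXe]
        exact hTne m hm1 hm2
      · rw [hbridge ω 1 (by omega), hXe]
        exact hT1
  have hdecomp_neg :
      {ω | (S j ω = 0 ∧ ∀ m, 1 ≤ m → m < j → S m ω ≠ 0) ∧ S 1 ω < 0} ∩ G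
        = ⋃ ε ∈ Aneg j, C ε := by
    ext ω
    simp only [Set.mem_inter_iff, Set.mem_setOf_eq, Set.mem_iUnion]
    constructor
    · rintro ⟨⟨⟨hj0, hmne⟩, h1neg⟩, hGω⟩
      refine ⟨fun i : Fin j => X (i:ℕ) ω, ?_, fun i => rfl⟩
      refine mem_Aneg_iff.mpr ⟨?_, ?_, ?_, ?_⟩
      · rw [Fintype.mem_piFinset]
        intro i
        rcases hGω i with h | h <;> simp [h]
      · rw [← hbridge ω j le_rfl]; exact hj0
      · intro m hm1 hm2
        rw [← hbridge ω m (by omega)]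
        exact hmne m hm1 hm2
      · rw [← hbridge ω 1 (by omega)]
        exact h1neg
    · rintro ⟨ε, hε, hωC⟩
      have hXe : (fun i : Fin j => X (i:ℕ) ω) = ε := funext fun i => hωC i
      obtain ⟨hpi, hT0, hTne, hT1⟩ := mem_Aneg_iff.mp hε
      have hGω : ω ∈ G := by
        intro i
        rw [hωC i]
        rcases mem_pm hpi i with h | h <;> simp [h]
      refine ⟨⟨⟨?_, ?_⟩, ?_⟩, hGω⟩
      · rw [hbridge ω j le_rfl, hXe]; exact hT0
      · intro m hm1 hm2
        rw [hbridge ω m (by omega), hXe]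
        exact hTne m hm1 hm2
      · rw [hbridge ω 1 (by omega), hXe]
        exact hT1
  have hdecomp_tot :
      {ω | S j ω = 0 ∧ ∀ m, 1 ≤ m → m < j → S m ω ≠ 0} ∩ G
        = ⋃ ε ∈ Atot j, C ε := by
    ext ω
    simp only [Set.mem_inter_iff, Set.mem_setOf_eq, Set.mem_iUnion]
    constructor
    · rintro ⟨⟨hj0, hmne⟩, hGω⟩
      refine ⟨fun i : Fin j => X (i:ℕ) ω, ?_, fun i => rfl⟩
      refine mem_Atot_iff.mpr ⟨?_, ?_, ?_⟩
      · rw [Fintype.mem_piFinset]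
        intro i
        rcases hGω i with h | h <;> simp [h]
      · rw [← hbridge ω j le_rfl]; exact hj0
      · intro m hm1 hm2
        rw [← hbridge ω m (by omega)]
        exact hmne m hm1 hm2
    · rintro ⟨ε, hε, hωC⟩
      have hXe : (fun i : Fin j => X (i:ℕ) ω) = ε := funext fun i => hωC i
      obtain ⟨hpi, hT0, hTne⟩ := mem_Atot_iff.mp hε
      have hGω : ω ∈ G := by
        intro i
        rw [hωC i]
        rcases mem_pm hpi i with h | h <;> simp [h]
      refine ⟨⟨?_, ?_⟩, hGω⟩
      · rw [hbridge ω j le_rfl, hXe]; exact hT0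
      · intro m hm1 hm2
        rw [hbridge ω m (by omega), hXe]
        exact hTne m hm1 hm2
  -- subsets
  have hsubpos : Apos j ⊆ Atot j := by
    intro ε hε
    obtain ⟨h1, h2, h3, _⟩ := mem_Apos_iff.mp hε
    exact mem_Atot_iff.mpr ⟨h1, h2, h3⟩
  have hsubneg : Aneg j ⊆ Atot j := by
    intro ε hε
    obtain ⟨h1, h2, h3, _⟩ := mem_Aneg_iff.mp hε
    exact mem_Atot_iff.mpr ⟨h1, h2, h3⟩
  -- the measures
  have hmupos := hmuE _ _ hdecomp_pos hsubpos
  have hmuneg := hmuE _ _ hdecomp_neg hsubneg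
  have hmutot := hmuE _ _ hdecomp_tot (Finset.Subset.refl _)
  -- cards
  have hcpos : (Apos j).card = catalan (n - 1) := by
    subst hjn
    exact card_Apos hn1
  have hcneg : (Aneg j).card = catalan (n - 1) := by
    rw [card_Aneg, hcpos]
  have hctot : (Atot j).card = 2 * catalan (n - 1) := by
    rw [card_Atot j (by omega), hcpos, hcneg]
    ring
  -- toReal computations
  have hWne : W ≠ ⊤ := by
    rw [hW]
    exact ENNReal.mul_ne_top (ENNReal.pow_ne_top ENNReal.ofReal_ne_top)
      (ENNReal.pow_ne_top ENNReal.ofReal_ne_top)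
  have hWt : W.toReal = p ^ n * (1 - p) ^ n := by
    rw [hW, ENNReal.toReal_mul, ENNReal.toReal_pow, ENNReal.toReal_pow,
      ENNReal.toReal_ofReal hp0.le, ENNReal.toReal_ofReal hq0]
  have htr : ∀ (c : ℕ), ((c : ENNReal) * W).toReal = (c : ℝ) * (p ^ n * (1 - p) ^ n) := by
    intro c
    rw [ENNReal.toReal_mul, ENNReal.toReal_natCast, hWt]
  refine ⟨?_, ?_, ?_⟩
  · rw [hmupos, hmuneg, hcpos, hcneg]
  · rw [hmuneg, hmutot, hcneg, hctot, htr, htr]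
    push_cast
    ring
  · rw [hmutot, hctot, htr]
    have hj2n : j / 2 = n := by omega
    have hjm2 : j - 2 = 2 * n - 2 := by omega
    rw [hj2n, hjm2, mul_pow, ← catalan_real hn1]
    push_cast
    ring
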